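/- Let C ⊂ S² be a convex body and let K be a supporting hemisphere of C with width_K(C) < π/2. Then the supporting hemisphere K* of C for which the lune K ∩ K* has thickness width_K(C) is unique. -/

import Mathlib

open scoped InnerProductSpace

noncomputable section

abbrev E3 := EuclideanSpace ℝ (Fin 3)

/-- The unit sphere S² in E³. -/
def S2 : Set E3 := Metric.sphere 0 1

/-- Spherical (geodesic) distance on the unit sphere. -/
def sdist (x y : E3) : ℝ := Real.arccos ⟪x, y⟫_ℝ

/-- The shorter great-circle arc joining `a` and `b`. -/
def arc (a b : E3) : Set E3 := {x | x ∈ S2 ∧ sdist a x + sdist x b = sdist a b}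

/-- Spherical convexity. -/
def SphConvex (A : Set E3) : Prop :=
  A ⊆ S2 ∧ (∀ x ∈ A, -x ∉ A) ∧ ∀ a ∈ A, ∀ b ∈ A, arc a b ⊆ A

/-- Closed hemisphere with center `c`. -/
def hemi (c : E3) : Set E3 := {x ∈ S2 | sdist c x ≤ Real.pi / 2}

/-- Open hemisphere with center `c`. -/
def openHemi (c : E3) : Set E3 := {x ∈ S2 | sdist c x < Real.pi / 2}

/-- Boundary of `A` relative to the sphere. -/
def relBoundary (A : Set E3) : Set E3 :=
  {p ∈ S2 | ∀ r > 0, (Metric.ball p r ∩ S2 ∩ A).Nonempty ∧ ((Metric.ball p r ∩ S2) \ A).Nonempty}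

/-- `A` has nonempty interior relative to the sphere. -/
def relIntNonempty (A : Set E3) : Prop := ∃ p ∈ S2, ∃ r > 0, Metric.ball p r ∩ S2 ⊆ A

/-- A spherical convex body. -/
def SphConvexBody (A : Set E3) : Prop := IsClosed A ∧ SphConvex A ∧ relIntNonempty A

/-- The hemisphere centered at `c` supports `A`. -/
def Supports (c : E3) (A : Set E3) : Prop :=
  c ∈ S2 ∧ A ⊆ hemi c ∧ ∃ p ∈ A, sdist c p = Real.pi / 2

/-- The hemisphere centered at `c` supports `A` at the point `p`. -/
def SupportsAt (c : E3) (A : Set E3) (p : E3) : Prop :=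
  c ∈ S2 ∧ A ⊆ hemi c ∧ p ∈ A ∧ sdist c p = Real.pi / 2

/-- `hemi g` and `hemi h` form a lune: distinct hemispheres with non-antipodal centers. -/
def IsLunePair (g h : E3) : Prop := g ∈ S2 ∧ h ∈ S2 ∧ g ≠ h ∧ g ≠ -h

/-- The center (midpoint) of the semicircle `G/H ⊆ bd(hemi g)` bounding the lune
`hemi g ∩ hemi h`: the point of the great circle `bd(hemi g)` nearest to `h`. -/
def scCenter (g h : E3) : E3 := ‖h - ⟪h, g⟫_ℝ • g‖⁻¹ • (h - ⟪h, g⟫_ℝ • g)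

/-- Thickness of the lune `hemi g ∩ hemi h`: the spherical distance between the
centers of its two bounding semicircles. -/
def luneTh (g h : E3) : ℝ := sdist (scCenter g h) (scCenter h g)

/-- The width of `A` determined by the supporting hemisphere centered at `c`:
the minimal thickness of a lune `K ∩ K*` with `K*` supporting `A`. -/
def widthAt (c : E3) (A : Set E3) : ℝ :=
  sInf {t | ∃ c', Supports c' A ∧ IsLunePair c c' ∧ t = luneTh c c'}

/-- The thickness of `A`: the minimum of `widthAt` over supporting hemispheres. -/
def thickness (A : Set E3) : ℝ :=
  sInf {t | ∃ c, Supports c A ∧ t = widthAt c A}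

/-- `A` is of constant width `w`. -/
def ConstWidth (A : Set E3) (w : ℝ) : Prop := ∀ c, Supports c A → widthAt c A = w

/-- A reduced spherical convex body. -/
def Reduced (R : Set E3) : Prop :=
  SphConvexBody R ∧ ∀ Z, SphConvexBody Z → Z ⊆ R → Z ≠ R → thickness Z < thickness R

/-- Cross product in E³. -/
def cross (u v : E3) : E3 :=
  (WithLp.equiv 2 (Fin 3 → ℝ)).symm
    ![u 1 * v 2 - u 2 * v 1, u 2 * v 0 - u 0 * v 2, u 0 * v 1 - u 1 * v 0]

/-- Orientation determinant of a triple of vectors in E³. -/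
def det3 (u v w : E3) : ℝ := ⟪cross u v, w⟫_ℝ

/-- `m` lies strictly between `m₁` and `m₂` in counterclockwise order
(positively oriented triple): the relation `≺ M₁ M M₂`. -/
def CCWBetween (m₁ m m₂ : E3) : Prop := 0 < det3 m₁ m m₂

/-- `c` is the center of the right supporting hemisphere of `A` at `p`. -/
def RightSupport (c : E3) (A : Set E3) (p : E3) : Prop :=
  SupportsAt c A p ∧ ∀ c', SupportsAt c' A p → 0 ≤ ⟪c', cross p c⟫_ℝ

/-- `c` is the center of the left supporting hemisphere of `A` at `p`. -/
def LeftSupport (c : E3) (A : Set E3) (p : E3) : Prop :=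
  SupportsAt c A p ∧ ∀ c', SupportsAt c' A p → ⟪c', cross p c⟫_ℝ ≤ 0

/-- Spherical angle at vertex `b` of the triangle `a b c`. -/
def sAngle (a b c : E3) : ℝ :=
  InnerProductGeometry.angle (a - ⟪a, b⟫_ℝ • b) (c - ⟪c, b⟫_ℝ • b)

/-- Spherical convex hull. -/
def sconvHull (A : Set E3) : Set E3 := ⋂₀ {B | A ⊆ B ∧ SphConvex B}

/-- Distance from a point to a set, in the spherical metric. -/
def sInfDist (x : E3) (A : Set E3) : ℝ := sInf (sdist x '' A)

/-- Hausdorff distance with respect to the spherical metric. -/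
def sHD (A B : Set E3) : ℝ :=
  max (sSup ((fun a => sInfDist a B) '' A)) (sSup ((fun b => sInfDist b A) '' B))

section AuxiliaryLemmas

open Set

lemma mem_S2_iff {x : E3} : x ∈ S2 ↔ ‖x‖ = 1 := by
  simp [S2, mem_sphere_zero_iff_norm]

lemma abs_inner_le_one' {x y : E3} (hx : ‖x‖ = 1) (hy : ‖y‖ = 1) : |⟪x, y⟫_ℝ| ≤ 1 := by
  simpa [hx, hy] using abs_real_inner_le_norm x y

lemma arccos_anti {x y : ℝ} (h : x ≤ y) : Real.arccos y ≤ Real.arccos x := by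
  unfold Real.arccos
  have := Real.monotone_arcsin h
  linarith

lemma mem_hemi_iff {c x : E3} : x ∈ hemi c ↔ x ∈ S2 ∧ 0 ≤ ⟪c, x⟫_ℝ := by
  simp [hemi, sdist, Real.arccos_le_pi_div_two]

lemma key_ineq (a t s : ℝ) (ha1 : -1 < a) (ha2 : a < 1) (ht : 0 < t) (ht2 : t ≤ 1 - a^2)
    (hs : 0 ≤ s) (hsq : s^2 = 1 - 2*t*a + t^2) : a - t < a * s := by
  rcases le_or_gt a 0 with ha | ha
  · rcases eq_or_lt_of_le ha with rfl | ha'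
    · simpa using ht
    · have hs1 : 1 < s := by nlinarith
      nlinarith [mul_pos ht (mul_pos ht (neg_pos.2 ha')), mul_pos ht (neg_pos.2 ha'),
        sq_nonneg (s-1), mul_pos (mul_pos ht ht) (sub_pos.2 hs1)]
  · rcases lt_trichotomy t a with h | h | h
    · have hsp : 0 < s := by nlinarith
      nlinarith [mul_pos ha hsp, mul_pos ht (sub_pos.2 h), sq_nonneg (a*s - a + t)]
    · have hsp : 0 < s := by nlinarith
      have : a - t = 0 := by linarith
      rw [this]; positivity
    · have : a * s ≥ 0 := mul_nonneg ha.le hs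
      linarith

lemma luneTh_eq {g h : E3} (hg : ‖g‖ = 1) (hh : ‖h‖ = 1)
    (h1 : -1 < ⟪g, h⟫_ℝ) (h2 : ⟪g, h⟫_ℝ < 1) :
    luneTh g h = Real.arccos (-⟪g, h⟫_ℝ) := by
  set τ : ℝ := ⟪g, h⟫_ℝ with hτ
  have hsym : ⟪h, g⟫_ℝ = τ := (real_inner_comm h g).symm
  have hgg : ⟪g, g⟫_ℝ = 1 := by rw [real_inner_self_eq_norm_sq, hg]; norm_num
  have hhh : ⟪h, h⟫_ℝ = 1 := by rw [real_inner_self_eq_norm_sq, hh]; norm_num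
  set u : E3 := h - τ • g with hu
  set v : E3 := g - τ • h with hv
  have huu : ⟪u, u⟫_ℝ = 1 - τ^2 := by
    rw [hu, inner_sub_left, inner_sub_right, inner_sub_right, real_inner_smul_left,
      real_inner_smul_left, real_inner_smul_right, real_inner_smul_right, hgg, hhh, hsym, ← hτ]
    ring
  have hvv : ⟪v, v⟫_ℝ = 1 - τ^2 := by
    rw [hv, inner_sub_left, inner_sub_right, inner_sub_right, real_inner_smul_left,
      real_inner_smul_left, real_inner_smul_right, real_inner_smul_right, hgg, hhh, hsym, ← hτ]
    ring
  have huv : ⟪u, v⟫_ℝ = -τ * (1 - τ^2) := by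
    rw [hu, hv, inner_sub_left, inner_sub_right, inner_sub_right, real_inner_smul_left,
      real_inner_smul_left, real_inner_smul_right, real_inner_smul_right, hgg, hhh, hsym, ← hτ]
    ring
  have hτ2 : 0 < 1 - τ^2 := by nlinarith
  set s : ℝ := Real.sqrt (1 - τ^2) with hs
  have hs2 : s^2 = 1 - τ^2 := Real.sq_sqrt hτ2.le
  have hs0 : 0 < s := Real.sqrt_pos.mpr hτ2
  have hnu : ‖u‖ = s := by
    rw [hs, ← huu, real_inner_self_eq_norm_sq, Real.sqrt_sq (norm_nonneg u)]
  have hnv : ‖v‖ = s := by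
    rw [hs, ← hvv, real_inner_self_eq_norm_sq, Real.sqrt_sq (norm_nonneg v)]
  have : luneTh g h = Real.arccos (s⁻¹ * (s⁻¹ * ⟪u, v⟫_ℝ)) := by
    rw [luneTh, sdist, scCenter, scCenter, hsym, ← hτ, ← hu, ← hv, hnu, hnv,
      real_inner_smul_left, real_inner_smul_right]
  rw [this, huv]
  congr 1
  rw [← hs2]
  field_simp

lemma not_hyperplane {C : Set E3} (hC : relIntNonempty C) {w : E3} (hw : ‖w‖ = 1) :
    ∃ p ∈ C, ⟪w, p⟫_ℝ ≠ 0 := by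
  obtain ⟨p, hpS, r, hr, hball⟩ := hC
  have hpC : p ∈ C := hball ⟨Metric.mem_ball_self hr, hpS⟩
  by_cases h0 : ⟪w, p⟫_ℝ = 0
  · set ε : ℝ := r / 4 with hε
    have hε0 : 0 < ε := by positivity
    have hpn : ‖p‖ = 1 := mem_S2_iff.mp hpS
    set u : E3 := p + ε • w with hu
    have hwp : ⟪p, w⟫_ℝ = 0 := by rw [real_inner_comm]; exact h0
    have hun : ‖u‖^2 = 1 + ε^2 := by
      rw [hu, norm_add_sq_real, real_inner_smul_right, hwp, norm_smul, hpn]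
      simp [abs_of_pos hε0, hw]
    have hu1 : 1 ≤ ‖u‖ := by nlinarith [norm_nonneg u, sq_nonneg ε]
    have hu2 : ‖u‖ ≤ 1 + ε := by nlinarith [norm_nonneg u]
    have hun0 : 0 < ‖u‖ := by linarith
    have hww : ⟪w, w⟫_ℝ = 1 := by rw [real_inner_self_eq_norm_sq, hw]; norm_num
    refine ⟨‖u‖⁻¹ • u, hball ⟨?_, ?_⟩, ?_⟩
    · rw [Metric.mem_ball, dist_eq_norm]
      have heq : ‖u‖⁻¹ • u - p = (‖u‖⁻¹ - 1) • u + ε • w := by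
        rw [hu]; module
      rw [heq]
      have h1 : ‖(‖u‖⁻¹ - 1) • u‖ ≤ ε := by
        rw [norm_smul, Real.norm_eq_abs]
        have e1 : |‖u‖⁻¹ - 1| * ‖u‖ = |(‖u‖⁻¹ - 1) * ‖u‖| := by
          rw [abs_mul, abs_of_nonneg (norm_nonneg u)]
        have e2 : (‖u‖⁻¹ - 1) * ‖u‖ = 1 - ‖u‖ := by field_simp
        rw [e1, e2, abs_of_nonpos (by linarith)]
        linarith
      have h2 : ‖ε • w‖ = ε := by
        rw [norm_smul, Real.norm_eq_abs, abs_of_pos hε0, hw, mul_one]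
      calc ‖(‖u‖⁻¹ - 1) • u + ε • w‖ ≤ ‖(‖u‖⁻¹ - 1) • u‖ + ‖ε • w‖ := norm_add_le _ _
        _ ≤ ε + ε := by rw [h2]; exact add_le_add h1 le_rfl
        _ < r := by rw [hε]; linarith
    · rw [mem_S2_iff, norm_smul, Real.norm_eq_abs, abs_of_nonneg (inv_nonneg.mpr (norm_nonneg u))]
      field_simp
    · have e : ⟪w, ‖u‖⁻¹ • u⟫_ℝ = ‖u‖⁻¹ * ε := by
        rw [real_inner_smul_right, hu, inner_add_right, real_inner_smul_right, h0, hww]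
        ring
      rw [e]
      positivity
  · exact ⟨p, hpC, h0⟩

end AuxiliaryLemmas

set_option maxHeartbeats 1000000 in
/-- the supporting hemisphere K* realizing width_K(C) < π/2 is
unique. -/
theorem unique_opposite_hemisphere (C : Set E3) (hC : SphConvexBody C)
    (q : E3) (hq : q ∈ S2) (hsub : C ⊆ openHemi q)
    (c : E3) (hc : Supports c C) (hw : widthAt c C < Real.pi / 2) :
    ∃! c' : E3, Supports c' C ∧ IsLunePair c c' ∧ luneTh c c' = widthAt c C := by

  -- Basic facts
  have hCs : C ⊆ S2 := hC.2.1.1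
  have hCcp : IsCompact C := IsCompact.of_isClosed_subset (isCompact_sphere (0:E3) 1) hC.1 hCs
  obtain ⟨p₀, hp₀C, hp₀d⟩ := hc.2.2
  have hcS : ‖c‖ = 1 := mem_S2_iff.mp hc.1
  have hqS : ‖q‖ = 1 := mem_S2_iff.mp hq
  have hCn : ∀ p ∈ C, ‖p‖ = 1 := fun p hp => mem_S2_iff.mp (hCs hp)
  have hcp₀ : ⟪c, p₀⟫_ℝ = 0 := by
    have hb := abs_le.mp (abs_inner_le_one' hcS (hCn p₀ hp₀C))
    have h1 : Real.arccos ⟪c, p₀⟫_ℝ = Real.pi / 2 := hp₀d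
    have h2 := Real.cos_arccos hb.1 hb.2
    rw [h1, Real.cos_pi_div_two] at h2
    exact h2.symm
  -- The set of centers of hemispheres containing C
  set F : Set E3 := {x | ‖x‖ = 1 ∧ ∀ p ∈ C, 0 ≤ ⟪x, p⟫_ℝ} with hF
  have hcF : c ∈ F := ⟨hcS, fun p hp => (mem_hemi_iff.mp (hc.2.1 hp)).2⟩
  have hqpos : ∀ p ∈ C, 0 < ⟪q, p⟫_ℝ := by
    intro p hp
    have := hsub hp
    rw [openHemi, Set.mem_sep_iff] at this
    exact Real.arccos_lt_pi_div_two.mp this.2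
  have hqF : q ∈ F := ⟨hqS, fun p hp => (hqpos p hp).le⟩
  have hqc : q ≠ c := by
    intro h
    have := hqpos p₀ hp₀C
    rw [h, hcp₀] at this
    exact lt_irrefl 0 this
  have hFclosed : IsClosed F := by
    have hrw : F = {x : E3 | ‖x‖ = 1} ∩ ⋂ p ∈ C, {x : E3 | 0 ≤ ⟪x, p⟫_ℝ} := by
      ext x
      simp [hF, Set.mem_iInter]
    rw [hrw]
    exact (isClosed_eq continuous_norm continuous_const).inter
      (isClosed_biInter fun p hp =>
        isClosed_le continuous_const (Continuous.inner continuous_id continuous_const))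
  have hFcp : IsCompact F :=
    IsCompact.of_isClosed_subset (isCompact_sphere (0:E3) 1) hFclosed
      (fun x hx => by rw [mem_sphere_zero_iff_norm]; exact hx.1)
  obtain ⟨z, hzF, hzmin'⟩ := hFcp.exists_isMinOn ⟨c, hcF⟩
    ((Continuous.inner continuous_const continuous_id).continuousOn :
      ContinuousOn (fun x : E3 => ⟪c, x⟫_ℝ) F)
  have hzmin : ∀ y ∈ F, ⟪c, z⟫_ℝ ≤ ⟪c, y⟫_ℝ := fun y hy => isMinOn_iff.mp hzmin' y hy
  have hzS : ‖z‖ = 1 := hzF.1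
  set a : ℝ := ⟪c, z⟫_ℝ with ha
  have ha1 : a < 1 :=
    lt_of_le_of_lt (hzmin q hqF) ((inner_lt_one_iff_real_of_norm_eq_one hcS hqS).mpr hqc.symm)
  have hnegc : -c ∉ F := by
    intro h
    obtain ⟨p, hpC, hne⟩ := not_hyperplane hC.2.2 hcS
    have h1 : 0 ≤ ⟪c, p⟫_ℝ := hcF.2 p hpC
    have h2 : 0 ≤ ⟪-c, p⟫_ℝ := h.2 p hpC
    rw [inner_neg_left] at h2
    exact hne (le_antisymm (by linarith) h1)
  have ha2 : -1 < a := by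
    rcases lt_or_ge (-1) a with h | h
    · exact h
    · exfalso
      have hb := abs_le.mp (abs_inner_le_one' hcS hzS)
      have haeq : a = -1 := le_antisymm (by linarith [hb.2, h]) hb.1
      have hcz : ‖c + z‖^2 = 0 := by
        rw [norm_add_sq_real, hcS, hzS, ← ha, haeq]; ring
      have : c + z = 0 := by
        rw [← norm_eq_zero]
        nlinarith [norm_nonneg (c + z)]
      have hzc : z = -c := by
        have := eq_neg_of_add_eq_zero_right this
        rw [this]
      rw [hzc] at hzF
      exact hnegc hzF
  -- The minimizing hemisphere touches C
  have htouch : ∃ p ∈ C, ⟪z, p⟫_ℝ = 0 := by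
    by_contra hcon
    push_neg at hcon
    obtain ⟨pm, hpmC, hpmmin'⟩ := hCcp.exists_isMinOn ⟨p₀, hp₀C⟩
      ((Continuous.inner continuous_const continuous_id).continuousOn :
        ContinuousOn (fun x : E3 => ⟪z, x⟫_ℝ) C)
    have hpmmin : ∀ p ∈ C, ⟪z, pm⟫_ℝ ≤ ⟪z, p⟫_ℝ := fun p hp => isMinOn_iff.mp hpmmin' p hp
    set δ : ℝ := ⟪z, pm⟫_ℝ with hδ
    have hδ0 : 0 < δ := lt_of_le_of_ne (hzF.2 pm hpmC) (Ne.symm (hcon pm hpmC))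
    set t : ℝ := min δ (1 - a^2) with htdef
    have ht0 : 0 < t := lt_min hδ0 (by nlinarith)
    have ht1 : t ≤ δ := min_le_left _ _
    have ht2 : t ≤ 1 - a^2 := min_le_right _ _
    set u : E3 := z - t • c with hu
    have hzc : ⟪z, c⟫_ℝ = a := by rw [ha]; exact (real_inner_comm z c).symm
    have hcc : ⟪c, c⟫_ℝ = 1 := by rw [real_inner_self_eq_norm_sq, hcS]; norm_num
    have hs2 : ‖u‖^2 = 1 - 2*t*a + t^2 := by
      rw [hu, norm_sub_sq_real, real_inner_smul_right, hzc, norm_smul, hzS, hcS,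
        Real.norm_eq_abs, abs_of_pos ht0]
      ring
    have hs0 : 0 < ‖u‖ := by nlinarith [norm_nonneg u, sq_nonneg (t - a)]
    set y : E3 := ‖u‖⁻¹ • u with hy
    have hyS : ‖y‖ = 1 := by
      rw [hy, norm_smul, Real.norm_eq_abs, abs_of_nonneg (inv_nonneg.mpr (norm_nonneg u))]
      field_simp
    have hyF : y ∈ F := by
      refine ⟨hyS, fun p hp => ?_⟩
      have hcp : ⟪c, p⟫_ℝ ≤ 1 := (abs_le.mp (abs_inner_le_one' hcS (hCn p hp))).2
      have hzp : δ ≤ ⟪z, p⟫_ℝ := hpmmin p hp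
      have hup : 0 ≤ ⟪u, p⟫_ℝ := by
        rw [hu, inner_sub_left, real_inner_smul_left]
        nlinarith
      rw [hy, real_inner_smul_left]
      exact mul_nonneg (inv_nonneg.mpr (norm_nonneg u)) hup
    have hcy : ⟪c, y⟫_ℝ = ‖u‖⁻¹ * (a - t) := by
      rw [hy, real_inner_smul_right, hu, inner_sub_right, real_inner_smul_right, hcc, ← ha]
      ring
    have hkey := key_ineq a t ‖u‖ ha2 ha1 ht0 ht2 (norm_nonneg u) hs2
    have hlt : ⟪c, y⟫_ℝ < a := by
      rw [hcy, inv_mul_eq_div]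
      exact (div_lt_iff₀ hs0).mpr (by linarith)
    exact absurd (hzmin y hyF) (not_le.mpr hlt)
  obtain ⟨p₁, hp₁C, hp₁⟩ := htouch
  have hzsup : Supports z C :=
    ⟨mem_S2_iff.mpr hzS, fun p hp => mem_hemi_iff.mpr ⟨hCs hp, hzF.2 p hp⟩,
      ⟨p₁, hp₁C, by rw [sdist, hp₁, Real.arccos_zero]⟩⟩
  have hcz_ne : c ≠ z := (inner_lt_one_iff_real_of_norm_eq_one hcS hzS).mp ha1
  have hcnz_ne : c ≠ -z := by
    intro h
    have : a = -1 := by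
      rw [ha, h, inner_neg_left, real_inner_self_eq_norm_sq, hzS]
      norm_num
    linarith
  have hlune : IsLunePair c z := ⟨hc.1, mem_S2_iff.mpr hzS, hcz_ne, hcnz_ne⟩
  set W : ℝ := Real.arccos (-a) with hW
  have hlzW : luneTh c z = W := by
    rw [luneTh_eq hcS hzS ha2 ha1]
  -- supporting centers lie in F and have inner products in (-1,1)
  have hsupF : ∀ c' : E3, Supports c' C → IsLunePair c c' →
      c' ∈ F ∧ -1 < ⟪c, c'⟫_ℝ ∧ ⟪c, c'⟫_ℝ < 1 := by
    intro c' hsc' hlp'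
    have hc'S : ‖c'‖ = 1 := mem_S2_iff.mp hsc'.1
    have h1 : ⟪c, c'⟫_ℝ < 1 := (inner_lt_one_iff_real_of_norm_eq_one hcS hc'S).mpr hlp'.2.2.1
    have h2 : -1 < ⟪c, c'⟫_ℝ := by
      have hn : ‖-c'‖ = 1 := by rw [norm_neg]; exact hc'S
      have := (inner_lt_one_iff_real_of_norm_eq_one hcS hn).mpr hlp'.2.2.2
      rw [inner_neg_right] at this
      linarith
    exact ⟨⟨hc'S, fun p hp => (mem_hemi_iff.mp (hsc'.2.1 hp)).2⟩, h2, h1⟩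
  set T : Set ℝ := {t | ∃ c', Supports c' C ∧ IsLunePair c c' ∧ t = luneTh c c'} with hT
  have hWT : W ∈ T := ⟨z, hzsup, hlune, hlzW.symm⟩
  have hlb : ∀ t ∈ T, W ≤ t := by
    rintro t ⟨c', hsc', hlp', rfl⟩
    obtain ⟨hc'F, h2, h1⟩ := hsupF c' hsc' hlp'
    have hc'S : ‖c'‖ = 1 := mem_S2_iff.mp hsc'.1
    rw [luneTh_eq hcS hc'S h2 h1, hW]
    exact arccos_anti (by linarith [hzmin c' hc'F])
  have hwval : widthAt c C = W := by
    rw [widthAt, ← hT]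
    exact le_antisymm (csInf_le ⟨W, hlb⟩ hWT) (le_csInf ⟨W, hWT⟩ hlb)
  have ha0 : a < 0 := by
    rw [hwval, hW] at hw
    have := Real.arccos_lt_pi_div_two.mp hw
    linarith
  refine ⟨z, ⟨hzsup, hlune, by rw [hwval, hlzW]⟩, ?_⟩
  rintro y' ⟨hy'sup, hy'lp, hy'w⟩
  obtain ⟨hy'F, hy2, hy1⟩ := hsupF y' hy'sup hy'lp
  have hy'S : ‖y'‖ = 1 := mem_S2_iff.mp hy'sup.1
  have hτa : ⟪c, y'⟫_ℝ = a := by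
    have harr : Real.arccos (-⟪c, y'⟫_ℝ) = Real.arccos (-a) := by
      rw [← luneTh_eq hcS hy'S hy2 hy1, hy'w, hwval, hW]
    have := (Real.arccos_inj (by linarith) (by linarith) (by linarith) (by linarith)).mp harr
    linarith
  by_contra hne
  have hyz1 : ⟪y', z⟫_ℝ < 1 := (inner_lt_one_iff_real_of_norm_eq_one hy'S hzS).mpr hne
  have hy'nz : y' ≠ -z := by
    intro h
    obtain ⟨p, hpC, hpne⟩ := not_hyperplane hC.2.2 hzS
    have h1 : 0 ≤ ⟪z, p⟫_ℝ := hzF.2 p hpC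
    have h2 : 0 ≤ ⟪y', p⟫_ℝ := hy'F.2 p hpC
    rw [h, inner_neg_left] at h2
    exact hpne (le_antisymm (by linarith) h1)
  have hyz2 : -1 < ⟪y', z⟫_ℝ := by
    have hn : ‖-z‖ = 1 := by rw [norm_neg]; exact hzS
    have := (inner_lt_one_iff_real_of_norm_eq_one hy'S hn).mpr hy'nz
    rw [inner_neg_right] at this
    linarith
  set m : E3 := y' + z with hm
  have hm2 : ‖m‖^2 = 2 + 2*⟪y', z⟫_ℝ := by
    rw [hm, norm_add_sq_real, hy'S, hzS]; ring
  have hm0 : 0 < ‖m‖ := by nlinarith [norm_nonneg m]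
  have hmlt : ‖m‖ < 2 := by nlinarith [norm_nonneg m]
  set w : E3 := ‖m‖⁻¹ • m with hwdef
  have hwS : ‖w‖ = 1 := by
    rw [hwdef, norm_smul, Real.norm_eq_abs, abs_of_nonneg (inv_nonneg.mpr (norm_nonneg m))]
    field_simp
  have hwF : w ∈ F := by
    refine ⟨hwS, fun p hp => ?_⟩
    have h1 : 0 ≤ ⟪z, p⟫_ℝ := hzF.2 p hp
    have h2 : 0 ≤ ⟪y', p⟫_ℝ := hy'F.2 p hp
    rw [hwdef, real_inner_smul_left, hm, inner_add_left]
    exact mul_nonneg (inv_nonneg.mpr (norm_nonneg m)) (by linarith)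
  have hcw : ⟪c, w⟫_ℝ = ‖m‖⁻¹ * (2*a) := by
    rw [hwdef, real_inner_smul_right, hm, inner_add_right, hτa, ← ha]
    ring
  have hlt : ⟪c, w⟫_ℝ < a := by
    rw [hcw, inv_mul_eq_div]
    rw [div_lt_iff₀ hm0]
    nlinarith [mul_pos (neg_pos.2 ha0) (sub_pos.2 hmlt)]
  exact absurd (hzmin w hwF) (not_le.mpr hlt)

end
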